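/- Frontier skew bound: if C is a consistent cut and streams i and j both have events in C, with frontier times m_i(C) and m_j(C), then |m_i(C) − m_j(C)| ≤ ε + 1. Moreover, if some stream j has an event in C with timestamp greater than ε, then every stream has an event in C. -/
import Mathlib


/-- An event is a pair (stream index, timestamp), with streams `Fin n` and
timestamps `Fin (N+1)` (i.e. `{0,…,N}`). The generating relation `R` with
clock-skew bound `ε`: same-stream order, and cross-stream order with skew. -/
def genR (n N ε : ℕ) (e f : Fin n × Fin (N + 1)) : Prop :=
  (e.1 = f.1 ∧ e.2 < f.2) ∨ (e.2 : ℕ) + ε < (f.2 : ℕ)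

/-- The happened-before relation `⇝` with skew `ε`: transitive closure of `R`. -/
def hb (n N ε : ℕ) : Fin n × Fin (N + 1) → Fin n × Fin (N + 1) → Prop :=
  Relation.TransGen (genR n N ε)

/-- A consistent cut: a set `C` of events such that `e ∈ C` and `f ⇝ e` imply `f ∈ C`. -/
def ConsistentCut (n N ε : ℕ) (C : Set (Fin n × Fin (N + 1))) : Prop :=
  ∀ e ∈ C, ∀ f, hb n N ε f e → f ∈ C

/-- frontier skew bound: if streams `i` and `j` both have events
in a consistent cut `C`, with frontier times `mi` and `mj` (largest timestamps
of the respective streams in `C`), then `|mi − mj| ≤ ε + 1`.  Moreover, if some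
stream `j` has an event in `C` with timestamp greater than `ε`, then every
stream has an event in `C`. -/
theorem frontier_skew_bound (n N ε : ℕ) (hn : 1 ≤ n) (hε : 1 ≤ ε)
    (C : Set (Fin n × Fin (N + 1))) (hC : ConsistentCut n N ε C) :
    (∀ (i j : Fin n) (mi mj : Fin (N + 1)),
      ((i, mi) ∈ C ∧ ∀ t : Fin (N + 1), (i, t) ∈ C → t ≤ mi) →
      ((j, mj) ∈ C ∧ ∀ t : Fin (N + 1), (j, t) ∈ C → t ≤ mj) →
      |(mi : ℤ) - (mj : ℤ)| ≤ (ε : ℤ) + 1) ∧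
    (∀ (j : Fin n) (t : Fin (N + 1)), (j, t) ∈ C → (ε : ℕ) < (t : ℕ) →
      ∀ i : Fin n, ∃ s : Fin (N + 1), (i, s) ∈ C) := by

  constructor
  · -- skew bound
    have key : ∀ (i j : Fin n) (mi mj : Fin (N + 1)),
        (i, mi) ∈ C → ((j, mj) ∈ C ∧ ∀ t : Fin (N + 1), (j, t) ∈ C → t ≤ mj) →
        (mi : ℕ) ≤ (mj : ℕ) + ε + 1 := by
      intro i j mi mj hmi ⟨hmj, hmax⟩
      by_contra h
      push_neg at h
      have hlt : (mj : ℕ) + 1 < N + 1 := by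
        have := mi.isLt; omega
      set s : Fin (N + 1) := ⟨(mj : ℕ) + 1, hlt⟩ with hs
      have hgen : genR n N ε (j, s) (i, mi) := by
        right; simp [hs]; omega
      have hsC : (j, s) ∈ C := hC _ hmi _ (Relation.TransGen.single hgen)
      have := hmax s hsC
      have : (s : ℕ) ≤ (mj : ℕ) := this
      simp [hs] at this
    intro i j mi mj hi hj
    have h1 := key i j mi mj hi.1 hj
    have h2 := key j i mj mi hj.1 hi
    rw [abs_le]
    omega
  · intro j t ht hεt i
    have hlt : (t : ℕ) - ε - 1 < N + 1 := by
      have := t.isLt; omega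
    refine ⟨⟨(t : ℕ) - ε - 1, hlt⟩, ?_⟩
    apply hC _ ht
    exact Relation.TransGen.single (Or.inr (by simp; omega))
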